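/- Let K be a Kraus family with derivative family K̇, and let C be a d×d complex matrix such that the r×r matrix τ with entries τ_{ij} = Tr(C† K_i† K_j C) is positive definite, and such that there exists an r×r Hermitian matrix h₀ with β(h₀) = 0. Then strong Lagrangian duality holds: inf{ 4 Tr(C† α(h) C) : h Hermitian, β(h) = 0 } = sup over d×d Hermitian matrices C̃ of inf over r×r Hermitian matrices h of [ 4 Tr(C† α(h) C) + Tr( C̃ · β(h) ) ]. -/

import Mathlib

open Matrix
open scoped ComplexOrder

/-- `α(h) = ∑_i (K̇_i − i ∑_j h_{ij} K_j)† (K̇_i − i ∑_j h_{ij} K_j)`. -/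
noncomputable def krausAlpha {d d' r : ℕ} (K Kd : Fin r → Matrix (Fin d') (Fin d) ℂ)
    (h : Matrix (Fin r) (Fin r) ℂ) : Matrix (Fin d) (Fin d) ℂ :=
  ∑ i, (Kd i - Complex.I • ∑ j, h i j • K j)ᴴ * (Kd i - Complex.I • ∑ j, h i j • K j)

/-- `β(h) = H + ∑_{i,j} h_{ij} K_i† K_j` where `H = i ∑_i K_i† K̇_i`. -/
noncomputable def krausBeta {d d' r : ℕ} (K Kd : Fin r → Matrix (Fin d') (Fin d) ℂ)
    (h : Matrix (Fin r) (Fin r) ℂ) : Matrix (Fin d) (Fin d) ℂ :=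
  (Complex.I • ∑ i, (K i)ᴴ * Kd i) + ∑ i, ∑ j, h i j • ((K i)ᴴ * K j)

namespace SDaux

variable {d d' r : ℕ}

lemma trace_conj_self {m n : ℕ} (X : Matrix (Fin m) (Fin n) ℂ) :
    ((Xᴴ * X).trace) = ((∑ a, ∑ b, Complex.normSq (X a b) : ℝ) : ℂ) := by
  push_cast
  rw [Finset.sum_comm]
  simp [Matrix.trace, Matrix.mul_apply, Matrix.conjTranspose_apply, Matrix.diag,
    ← Complex.normSq_eq_conj_mul_self]

lemma trace_conj_self_re_nonneg {m n : ℕ} (X : Matrix (Fin m) (Fin n) ℂ) :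
    0 ≤ ((Xᴴ * X).trace).re := by
  rw [trace_conj_self, Complex.ofReal_re]
  exact Finset.sum_nonneg fun a _ => Finset.sum_nonneg fun b _ => Complex.normSq_nonneg _

lemma trace_conj_self_re_eq_zero {m n : ℕ} (X : Matrix (Fin m) (Fin n) ℂ)
    (hX : ((Xᴴ * X).trace).re = 0) : X = 0 := by
  rw [trace_conj_self, Complex.ofReal_re] at hX
  ext a b
  have h1 : ∀ a ∈ Finset.univ, (0:ℝ) ≤ ∑ b, Complex.normSq (X a b) := by
    intro a _; exact Finset.sum_nonneg fun b _ => Complex.normSq_nonneg _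
  have h2 := (Finset.sum_eq_zero_iff_of_nonneg h1).mp hX a (Finset.mem_univ a)
  have h3 : ∀ b ∈ Finset.univ, (0:ℝ) ≤ Complex.normSq (X a b) := fun b _ =>
    Complex.normSq_nonneg _
  have h4 := (Finset.sum_eq_zero_iff_of_nonneg h3).mp h2 b (Finset.mem_univ b)
  simpa using Complex.normSq_eq_zero.mp h4

/-- the complex "inner product" on `r`-tuples of matrices -/
noncomputable def ipc (X Y : Fin r → Matrix (Fin d') (Fin d) ℂ) : ℂ :=
  ∑ i, ((X i)ᴴ * Y i).trace

lemma ipc_conj (X Y : Fin r → Matrix (Fin d') (Fin d) ℂ) :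
    ipc Y X = (starRingEnd ℂ) (ipc X Y) := by
  simp only [ipc, map_sum]
  refine Finset.sum_congr rfl fun i _ => ?_
  rw [starRingEnd_apply, ← Matrix.trace_conjTranspose, Matrix.conjTranspose_mul,
    Matrix.conjTranspose_conjTranspose]

lemma ipc_re_comm (X Y : Fin r → Matrix (Fin d') (Fin d) ℂ) :
    (ipc Y X).re = (ipc X Y).re := by
  rw [ipc_conj]
  exact Complex.conj_re _

lemma ipc_add_left (X Y Z : Fin r → Matrix (Fin d') (Fin d) ℂ) :
    ipc (X + Y) Z = ipc X Z + ipc Y Z := by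
  simp [ipc, Matrix.conjTranspose_add, Matrix.add_mul, Finset.sum_add_distrib]

lemma ipc_add_right (X Y Z : Fin r → Matrix (Fin d') (Fin d) ℂ) :
    ipc X (Y + Z) = ipc X Y + ipc X Z := by
  simp [ipc, Matrix.mul_add, Finset.sum_add_distrib]

lemma ipc_smul_right (c : ℝ) (X Y : Fin r → Matrix (Fin d') (Fin d) ℂ) :
    ipc X (c • Y) = c • ipc X Y := by
  simp [ipc, Matrix.mul_smul, Finset.smul_sum]

lemma ipc_smul_left (c : ℝ) (X Y : Fin r → Matrix (Fin d') (Fin d) ℂ) :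
    ipc (c • X) Y = c • ipc X Y := by
  simp [ipc, Matrix.conjTranspose_smul, Matrix.smul_mul, Finset.smul_sum]

lemma ipc_self_nonneg (X : Fin r → Matrix (Fin d') (Fin d) ℂ) : 0 ≤ (ipc X X).re := by
  simp only [ipc, Complex.re_sum]
  exact Finset.sum_nonneg fun i _ => trace_conj_self_re_nonneg (X i)

lemma ipc_self_eq_zero (X : Fin r → Matrix (Fin d') (Fin d) ℂ)
    (hX : (ipc X X).re = 0) : X = 0 := by
  simp only [ipc, Complex.re_sum] at hX
  funext i
  refine trace_conj_self_re_eq_zero (X i) ?_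
  exact (Finset.sum_eq_zero_iff_of_nonneg
    (fun i _ => trace_conj_self_re_nonneg (X i))).mp hX i (Finset.mem_univ i)

noncomputable def Tm (K : Fin r → Matrix (Fin d') (Fin d) ℂ) (C : Matrix (Fin d) (Fin d) ℂ)
    (h : Matrix (Fin r) (Fin r) ℂ) : Fin r → Matrix (Fin d') (Fin d) ℂ :=
  fun i => (-Complex.I) • ∑ j, h i j • (K j * C)

noncomputable def um (Kd : Fin r → Matrix (Fin d') (Fin d) ℂ) (C : Matrix (Fin d) (Fin d) ℂ) :
    Fin r → Matrix (Fin d') (Fin d) ℂ := fun i => Kd i * C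

lemma Tm_add (K : Fin r → Matrix (Fin d') (Fin d) ℂ) (C : Matrix (Fin d) (Fin d) ℂ)
    (a b : Matrix (Fin r) (Fin r) ℂ) : Tm K C (a + b) = Tm K C a + Tm K C b := by
  funext i
  simp [Tm, Matrix.add_apply, add_smul, Finset.sum_add_distrib, smul_add]

lemma Tm_smul (K : Fin r → Matrix (Fin d') (Fin d) ℂ) (C : Matrix (Fin d) (Fin d) ℂ)
    (c : ℝ) (a : Matrix (Fin r) (Fin r) ℂ) : Tm K C (c • a) = c • Tm K C a := by
  funext i
  simp only [Tm, Matrix.smul_apply, Pi.smul_apply]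
  rw [smul_comm]
  congr 1
  rw [Finset.smul_sum]
  exact Finset.sum_congr rfl fun j _ => smul_assoc c (a i j) (K j * C)

/-- If `τ` is positive definite then `Tm` is injective. -/
lemma eq_zero_of_Tm_eq_zero (K : Fin r → Matrix (Fin d') (Fin d) ℂ)
    (C : Matrix (Fin d) (Fin d) ℂ)
    (hτ : (Matrix.of fun i j : Fin r => (Cᴴ * (K i)ᴴ * K j * C).trace).PosDef)
    (v : Matrix (Fin r) (Fin r) ℂ) (hTv : Tm K C v = 0) : v = 0 := by
  have hrow : ∀ i, (∑ j, v i j • (K j * C)) = 0 := by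
    intro i
    have h1 : (-Complex.I) • ∑ j, v i j • (K j * C) = 0 := congrFun hTv i
    have h2 : (-Complex.I : ℂ) ≠ 0 := by simp [Complex.I_ne_zero]
    rcases smul_eq_zero.mp h1 with h | h
    · exact absurd h h2
    · exact h
  ext i j
  have hmv : (Matrix.of fun i j : Fin r => (Cᴴ * (K i)ᴴ * K j * C).trace) *ᵥ
      (fun j => v i j) = 0 := by
    funext k
    have h3 : ((K k * C)ᴴ * (∑ j, v i j • (K j * C))).trace = 0 := by
      rw [hrow i, Matrix.mul_zero, Matrix.trace_zero]
    rw [Matrix.mul_sum, Matrix.trace_sum] at h3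
    simp only [Matrix.mul_smul, Matrix.trace_smul, smul_eq_mul] at h3
    rw [Matrix.mulVec]
    simp only [Matrix.of_apply, Pi.zero_apply]
    rw [dotProduct]
    rw [← h3]
    refine Finset.sum_congr rfl fun j' _ => ?_
    rw [mul_comm]
    congr 1
    rw [Matrix.conjTranspose_mul, Matrix.mul_assoc, ← Matrix.mul_assoc]
  by_contra hne
  have hvec : (fun j => v i j) ≠ 0 := by
    intro h0
    exact hne (by simpa using congrFun h0 j)
  have := hτ.dotProduct_mulVec_pos hvec
  rw [hmv] at this
  simp at this

/-- the objective as a squared norm -/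
noncomputable def fval (K Kd : Fin r → Matrix (Fin d') (Fin d) ℂ)
    (C : Matrix (Fin d) (Fin d) ℂ) (h : Matrix (Fin r) (Fin r) ℂ) : ℝ :=
  4 * (ipc (um Kd C + Tm K C h) (um Kd C + Tm K C h)).re

lemma fval_nonneg (K Kd : Fin r → Matrix (Fin d') (Fin d) ℂ)
    (C : Matrix (Fin d) (Fin d) ℂ) (h : Matrix (Fin r) (Fin r) ℂ) :
    0 ≤ fval K Kd C h := by
  have := ipc_self_nonneg (um Kd C + Tm K C h)
  unfold fval
  linarith

lemma MC_eq (K Kd : Fin r → Matrix (Fin d') (Fin d) ℂ) (C : Matrix (Fin d) (Fin d) ℂ)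
    (h : Matrix (Fin r) (Fin r) ℂ) (i : Fin r) :
    (Kd i - Complex.I • ∑ j, h i j • K j) * C = (um Kd C + Tm K C h) i := by
  simp only [um, Tm, Pi.add_apply, Matrix.sub_mul, Matrix.smul_mul, Finset.sum_mul]
  rw [sub_eq_add_neg, ← neg_smul]
  congr 2
  rw [Matrix.sum_mul]
  exact Finset.sum_congr rfl fun j _ => by rw [Matrix.smul_mul]

lemma objective_eq (K Kd : Fin r → Matrix (Fin d') (Fin d) ℂ) (C : Matrix (Fin d) (Fin d) ℂ)
    (h : Matrix (Fin r) (Fin r) ℂ) :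
    4 * ((Cᴴ * krausAlpha K Kd h * C).trace).re = fval K Kd C h := by
  unfold fval ipc krausAlpha
  congr 2
  rw [Matrix.mul_sum, Matrix.sum_mul, Matrix.trace_sum]
  refine Finset.sum_congr rfl fun i _ => ?_
  rw [← MC_eq K Kd C h i, Matrix.conjTranspose_mul]
  rw [Matrix.mul_assoc, Matrix.mul_assoc, Matrix.mul_assoc]

/-- the linear part of `β` -/
noncomputable def Lc (K : Fin r → Matrix (Fin d') (Fin d) ℂ)
    (h : Matrix (Fin r) (Fin r) ℂ) : Matrix (Fin d) (Fin d) ℂ :=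
  ∑ i, ∑ j, h i j • ((K i)ᴴ * K j)

lemma Lc_add (K : Fin r → Matrix (Fin d') (Fin d) ℂ) (a b : Matrix (Fin r) (Fin r) ℂ) :
    Lc K (a + b) = Lc K a + Lc K b := by
  simp [Lc, Matrix.add_apply, add_smul, Finset.sum_add_distrib]

lemma Lc_smul (K : Fin r → Matrix (Fin d') (Fin d) ℂ) (c : ℝ) (a : Matrix (Fin r) (Fin r) ℂ) :
    Lc K (c • a) = c • Lc K a := by
  simp only [Lc, Matrix.smul_apply, Finset.smul_sum]
  exact Finset.sum_congr rfl fun i _ => Finset.sum_congr rfl fun j _ =>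
    smul_assoc c (a i j) ((K i)ᴴ * K j)

/-- `Lc` as an `ℝ`-linear map -/
noncomputable def LcL (K : Fin r → Matrix (Fin d') (Fin d) ℂ) :
    Matrix (Fin r) (Fin r) ℂ →ₗ[ℝ] Matrix (Fin d) (Fin d) ℂ where
  toFun := Lc K
  map_add' := Lc_add K
  map_smul' := Lc_smul K

lemma beta_eq (K Kd : Fin r → Matrix (Fin d') (Fin d) ℂ) (h : Matrix (Fin r) (Fin r) ℂ) :
    krausBeta K Kd h = (Complex.I • ∑ i, (K i)ᴴ * Kd i) + Lc K h := rfl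

lemma beta_add (K Kd : Fin r → Matrix (Fin d') (Fin d) ℂ) (a b : Matrix (Fin r) (Fin r) ℂ) :
    krausBeta K Kd (a + b) = krausBeta K Kd a + Lc K b := by
  rw [beta_eq, beta_eq, Lc_add]
  abel

/-- the real submodule of Hermitian matrices -/
noncomputable def herm (n : ℕ) : Submodule ℝ (Matrix (Fin n) (Fin n) ℂ) where
  carrier := {v | vᴴ = v}
  add_mem' := by
    intro a b ha hb
    simp only [Set.mem_setOf_eq] at *
    rw [Matrix.conjTranspose_add, ha, hb]
  zero_mem' := by simp
  smul_mem' := by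
    intro c v hv
    simp only [Set.mem_setOf_eq] at *
    rw [Matrix.conjTranspose_smul, star_trivial, hv]

lemma mem_herm {n : ℕ} (v : Matrix (Fin n) (Fin n) ℂ) : v ∈ herm n ↔ v.IsHermitian :=
  Iff.rfl

lemma Lc_herm (K : Fin r → Matrix (Fin d') (Fin d) ℂ) (v : Matrix (Fin r) (Fin r) ℂ)
    (hv : v ∈ herm r) : Lc K v ∈ herm d := by
  rw [mem_herm] at hv ⊢
  have hstar : ∀ i j, star (v i j) = v j i := fun i j => congrFun (congrFun hv j) i
  unfold Matrix.IsHermitian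
  unfold Lc
  rw [Matrix.conjTranspose_sum]
  rw [Finset.sum_comm]
  refine Finset.sum_congr rfl fun j _ => ?_
  rw [Matrix.conjTranspose_sum]
  refine Finset.sum_congr rfl fun i _ => ?_
  rw [Matrix.conjTranspose_smul, Matrix.conjTranspose_mul, Matrix.conjTranspose_conjTranspose,
    hstar j i]

/-- the linear term of the expansion of `fval` around `a` -/
noncomputable def DlinL (K Kd : Fin r → Matrix (Fin d') (Fin d) ℂ)
    (C : Matrix (Fin d) (Fin d) ℂ) (a : Matrix (Fin r) (Fin r) ℂ) :
    Matrix (Fin r) (Fin r) ℂ →ₗ[ℝ] ℝ where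
  toFun b := 8 * (ipc (um Kd C + Tm K C a) (Tm K C b)).re
  map_add' x y := by
    show 8 * (ipc (um Kd C + Tm K C a) (Tm K C (x + y))).re
      = 8 * (ipc (um Kd C + Tm K C a) (Tm K C x)).re
        + 8 * (ipc (um Kd C + Tm K C a) (Tm K C y)).re
    rw [Tm_add, ipc_add_right, Complex.add_re]
    ring
  map_smul' c x := by
    show 8 * (ipc (um Kd C + Tm K C a) (Tm K C (c • x))).re
      = c • (8 * (ipc (um Kd C + Tm K C a) (Tm K C x)).re)
    rw [Tm_smul, ipc_smul_right]
    simp only [Complex.real_smul, Complex.re_ofReal_mul, smul_eq_mul]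
    ring

/-- the expansion of `fval` -/
lemma fval_add (K Kd : Fin r → Matrix (Fin d') (Fin d) ℂ) (C : Matrix (Fin d) (Fin d) ℂ)
    (a b : Matrix (Fin r) (Fin r) ℂ) :
    fval K Kd C (a + b) = fval K Kd C a + DlinL K Kd C a b
      + 4 * (ipc (Tm K C b) (Tm K C b)).re := by
  unfold fval
  rw [Tm_add, ← add_assoc]
  simp only [DlinL, LinearMap.coe_mk, AddHom.coe_mk]
  rw [ipc_add_left, Complex.add_re,
    ipc_add_right (um Kd C + Tm K C a) (um Kd C + Tm K C a) (Tm K C b), Complex.add_re,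
    ipc_add_right (Tm K C b) (um Kd C + Tm K C a) (Tm K C b), Complex.add_re,
    ipc_re_comm (Tm K C b) (um Kd C + Tm K C a)]
  ring

/-- Main construction: existence of an optimal feasible point and a Lagrange multiplier. -/
lemma exists_opt (K Kd : Fin r → Matrix (Fin d') (Fin d) ℂ) (C : Matrix (Fin d) (Fin d) ℂ)
    (hτ : (Matrix.of fun i j : Fin r => (Cᴴ * (K i)ᴴ * K j * C).trace).PosDef)
    (h₀ : Matrix (Fin r) (Fin r) ℂ) (h₀h : h₀.IsHermitian) (h₀β : krausBeta K Kd h₀ = 0) :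
    ∃ hst : Matrix (Fin r) (Fin r) ℂ, hst.IsHermitian ∧ krausBeta K Kd hst = 0 ∧
      (∀ h, h.IsHermitian → krausBeta K Kd h = 0 → fval K Kd C hst ≤ fval K Kd C h) ∧
      ∃ Ct : Matrix (Fin d) (Fin d) ℂ, Ct.IsHermitian ∧
        ∀ h, h.IsHermitian →
          fval K Kd C hst ≤ fval K Kd C h + ((Ct * krausBeta K Kd h).trace).re := by
  classical
  -- the feasible directions
  set W : Submodule ℝ (Matrix (Fin r) (Fin r) ℂ) := herm r ⊓ LinearMap.ker (LcL K) with hW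
  -- the (scaled) quadratic form, restricted to `W`
  set Bres : LinearMap.BilinForm ℝ W := LinearMap.mk₂ ℝ
      (fun x y => 8 * (ipc (Tm K C (x:Matrix (Fin r) (Fin r) ℂ)) (Tm K C (y:Matrix (Fin r) (Fin r) ℂ))).re)
      (fun x y z => by push_cast; rw [Tm_add, ipc_add_left, Complex.add_re]; ring)
      (fun c x y => by push_cast; rw [Tm_smul, ipc_smul_left]; simp [Complex.real_smul]; ring)
      (fun x y z => by push_cast; rw [Tm_add, ipc_add_right, Complex.add_re]; ring)
      (fun c x y => by push_cast; rw [Tm_smul, ipc_smul_right]; simp [Complex.real_smul]; ring)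
      with hBres
  have hBresApply : ∀ x y : W, Bres x y
      = 8 * (ipc (Tm K C (x:Matrix (Fin r) (Fin r) ℂ)) (Tm K C (y:Matrix (Fin r) (Fin r) ℂ))).re :=
    fun x y => rfl
  have hnd : Bres.Nondegenerate := by
    constructor <;> intro x hx <;> (
    have h1 := hx x
    rw [hBresApply] at h1
    have h2 : (ipc (Tm K C (x:Matrix (Fin r) (Fin r) ℂ)) (Tm K C (x:Matrix (Fin r) (Fin r) ℂ))).re = 0 := by
      linarith
    have h3 := ipc_self_eq_zero _ h2
    have h4 := eq_zero_of_Tm_eq_zero K C hτ _ h3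
    exact Subtype.ext h4)
  set ℓ : Module.Dual ℝ W := -((DlinL K Kd C h₀).comp W.subtype) with hℓ
  set v0 : W := (Bres.toDual hnd).symm ℓ with hv0
  have hv0prop : ∀ w : W, Bres v0 w = ℓ w := fun w =>
    LinearMap.BilinForm.apply_toDual_symm_apply (B := Bres) (hB := hnd) ℓ w
  set hst : Matrix (Fin r) (Fin r) ℂ := h₀ + (v0 : Matrix (Fin r) (Fin r) ℂ) with hhst
  have hv0W : ((v0 : Matrix (Fin r) (Fin r) ℂ) ∈ herm r)
      ∧ (v0 : Matrix (Fin r) (Fin r) ℂ) ∈ LinearMap.ker (LcL K) :=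
    Submodule.mem_inf.mp v0.2
  have hsth : hst.IsHermitian := by
    rw [hhst]
    exact (herm r).add_mem h₀h hv0W.1 -- membership in herm = IsHermitian
  have hv0Lc : Lc K (v0 : Matrix (Fin r) (Fin r) ℂ) = 0 := hv0W.2
  have hstβ : krausBeta K Kd hst = 0 := by
    rw [hhst, beta_add, h₀β, hv0Lc, zero_add]
  -- the derivative of `fval` at `hst` vanishes on `W`
  have hder : ∀ w : Matrix (Fin r) (Fin r) ℂ, w ∈ W → DlinL K Kd C hst w = 0 := by
    intro w hw
    have h5 : DlinL K Kd C hst w = DlinL K Kd C h₀ w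
        + 8 * (ipc (Tm K C (v0 : Matrix (Fin r) (Fin r) ℂ)) (Tm K C w)).re := by
      simp only [DlinL, LinearMap.coe_mk, AddHom.coe_mk]
      rw [hhst, Tm_add, ← add_assoc, ipc_add_left, Complex.add_re]
      ring
    have h6 := hv0prop ⟨w, hw⟩
    rw [hBresApply] at h6
    rw [hℓ] at h6
    simp only [LinearMap.neg_apply, LinearMap.comp_apply, Submodule.coe_subtype] at h6
    rw [h5, h6]
    ring
  -- minimality over the feasible set
  have hmin : ∀ h : Matrix (Fin r) (Fin r) ℂ, h.IsHermitian → krausBeta K Kd h = 0 →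
      fval K Kd C hst ≤ fval K Kd C h := by
    intro h hh hβ
    have hWmem : h - hst ∈ W := by
      refine Submodule.mem_inf.mpr ⟨(herm r).sub_mem hh hsth, ?_⟩
      rw [LinearMap.mem_ker]
      have : krausBeta K Kd h = krausBeta K Kd hst + Lc K (h - hst) := by
        rw [← beta_add, add_sub_cancel]
      rw [hβ, hstβ, zero_add] at this
      exact this.symm
    have hsum : h = hst + (h - hst) := by abel
    calc fval K Kd C hst ≤ fval K Kd C hst + 4 * (ipc (Tm K C (h - hst)) (Tm K C (h - hst))).re := by
          have := ipc_self_nonneg (Tm K C (h - hst)); linarith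
      _ = fval K Kd C h := by
          conv_rhs => rw [hsum]
          rw [fval_add K Kd C hst (h - hst), hder _ hWmem]
          ring
  refine ⟨hst, hsth, hstβ, hmin, ?_⟩
  -- construct the Lagrange multiplier
  set Λ : (herm r : Submodule ℝ (Matrix (Fin r) (Fin r) ℂ)) →ₗ[ℝ] (herm d : Submodule ℝ (Matrix (Fin d) (Fin d) ℂ)) :=
    (LcL K).restrict (fun x hx => Lc_herm K x hx) with hΛ
  have hΛapply : ∀ x : herm r, (Λ x : Matrix (Fin d) (Fin d) ℂ) = Lc K (x : Matrix (Fin r) (Fin r) ℂ) :=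
    fun x => rfl
  set D' : (herm r : Submodule ℝ (Matrix (Fin r) (Fin r) ℂ)) →ₗ[ℝ] ℝ :=
    (DlinL K Kd C hst).comp (herm r).subtype with hD'
  have hker : LinearMap.ker Λ ≤ LinearMap.ker D' := by
    intro x hx
    rw [LinearMap.mem_ker] at hx ⊢
    have h7 : Lc K (x : Matrix (Fin r) (Fin r) ℂ) = 0 := by
      rw [← hΛapply, hx]; rfl
    have h8 : (x : Matrix (Fin r) (Fin r) ℂ) ∈ W :=
      Submodule.mem_inf.mpr ⟨x.2, h7⟩
    exact hder _ h8
  set Dq := (LinearMap.ker Λ).liftQ D' hker with hDq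
  set ψ₀ : (LinearMap.range Λ : Submodule ℝ (herm d : Submodule ℝ (Matrix (Fin d) (Fin d) ℂ))) →ₗ[ℝ] ℝ :=
    Dq.comp (Λ.quotKerEquivRange).symm.toLinearMap with hψ₀
  have hψ₀prop : ∀ x : herm r, ψ₀ ⟨Λ x, LinearMap.mem_range_self Λ x⟩ = D' x := by
    intro x
    have h9 := Λ.quotKerEquivRange_symm_apply_image x (LinearMap.mem_range_self Λ x)
    rw [hψ₀]
    simp only [LinearMap.comp_apply, LinearEquiv.coe_toLinearMap]
    rw [h9, hDq]
    simp [Submodule.liftQ_apply]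
  obtain ⟨ψ, hψ⟩ := LinearMap.exists_extend ψ₀
  -- the trace pairing on Hermitian matrices
  set Bt : LinearMap.BilinForm ℝ (herm d : Submodule ℝ (Matrix (Fin d) (Fin d) ℂ)) :=
    LinearMap.mk₂ ℝ
      (fun x y => (((x : Matrix (Fin d) (Fin d) ℂ) * (y : Matrix (Fin d) (Fin d) ℂ)).trace).re)
      (fun x y z => by push_cast; rw [Matrix.add_mul, Matrix.trace_add, Complex.add_re])
      (fun c x y => by push_cast; rw [Matrix.smul_mul, Matrix.trace_smul]; simp [Complex.real_smul])
      (fun x y z => by push_cast; rw [Matrix.mul_add, Matrix.trace_add, Complex.add_re])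
      (fun c x y => by push_cast; rw [Matrix.mul_smul, Matrix.trace_smul]; simp [Complex.real_smul])
      with hBt
  have hBtApply : ∀ x y : (herm d : Submodule ℝ (Matrix (Fin d) (Fin d) ℂ)), Bt x y
      = (((x : Matrix (Fin d) (Fin d) ℂ) * (y : Matrix (Fin d) (Fin d) ℂ)).trace).re :=
    fun x y => rfl
  have hndt : Bt.Nondegenerate := by
    constructor <;> intro x hx <;> (
    have h10 := hx x
    rw [hBtApply] at h10
    have h11 : ((x : Matrix (Fin d) (Fin d) ℂ)ᴴ * (x : Matrix (Fin d) (Fin d) ℂ)).trace.re = 0 := by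
      rw [x.2]  -- x is Hermitian: xᴴ = x
      exact h10
    exact Subtype.ext (trace_conj_self_re_eq_zero _ h11))
  set Ctm := (Bt.toDual hndt).symm (-ψ) with hCtm
  have hCtmProp : ∀ y, Bt Ctm y = -(ψ y) := fun y =>
    LinearMap.BilinForm.apply_toDual_symm_apply (B := Bt) (hB := hndt) (-ψ) y
  refine ⟨(Ctm : Matrix (Fin d) (Fin d) ℂ), Ctm.2, ?_⟩
  intro h hh
  -- key identity: the multiplier term cancels the derivative
  have hkey : ∀ v : Matrix (Fin r) (Fin r) ℂ, v ∈ herm r →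
      (((Ctm : Matrix (Fin d) (Fin d) ℂ) * Lc K v).trace).re = -(DlinL K Kd C hst v) := by
    intro v hv
    set x : (herm r : Submodule ℝ (Matrix (Fin r) (Fin r) ℂ)) := ⟨v, hv⟩ with hx
    have h12 : (((Ctm : Matrix (Fin d) (Fin d) ℂ) * Lc K v).trace).re = Bt Ctm (Λ x) := by
      rw [hBtApply, hΛapply]
    rw [h12, hCtmProp]
    have h13 : ψ (Λ x) = ψ₀ ⟨Λ x, LinearMap.mem_range_self Λ x⟩ := by
      rw [← hψ]
      rfl
    rw [h13, hψ₀prop]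
    rfl
  -- final inequality
  have hv : h - hst ∈ herm r := (herm r).sub_mem hh hsth
  have hβh : krausBeta K Kd h = Lc K (h - hst) := by
    have : krausBeta K Kd h = krausBeta K Kd hst + Lc K (h - hst) := by
      rw [← beta_add, add_sub_cancel]
    rw [hstβ, zero_add] at this
    exact this
  have hsum : h = hst + (h - hst) := by abel
  have hexp : fval K Kd C h = fval K Kd C hst + DlinL K Kd C hst (h - hst)
      + 4 * (ipc (Tm K C (h - hst)) (Tm K C (h - hst))).re := by
    conv_lhs => rw [hsum]
    rw [fval_add K Kd C hst (h - hst)]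
  rw [hβh, hkey _ hv, hexp]
  have := ipc_self_nonneg (Tm K C (h - hst))
  linarith

end SDaux

theorem strong_duality_perturbation_code {d d' r : ℕ}
    (K Kd : Fin r → Matrix (Fin d') (Fin d) ℂ)
    (hK : ∑ i, (K i)ᴴ * K i = 1)
    (hKd : ∑ i, ((Kd i)ᴴ * K i + (K i)ᴴ * Kd i) = 0)
    (C : Matrix (Fin d) (Fin d) ℂ)
    (hτ : (Matrix.of fun i j : Fin r =>
        (Cᴴ * (K i)ᴴ * K j * C).trace).PosDef)
    (hfeas : ∃ h₀ : Matrix (Fin r) (Fin r) ℂ, h₀.IsHermitian ∧ krausBeta K Kd h₀ = 0) :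
    sInf {x : ℝ | ∃ h : Matrix (Fin r) (Fin r) ℂ, h.IsHermitian ∧
        krausBeta K Kd h = 0 ∧
        x = 4 * ((Cᴴ * krausAlpha K Kd h * C).trace).re}
      = sSup {x : ℝ | ∃ Ct : Matrix (Fin d) (Fin d) ℂ, Ct.IsHermitian ∧
          x = sInf {y : ℝ | ∃ h : Matrix (Fin r) (Fin r) ℂ, h.IsHermitian ∧
            y = 4 * ((Cᴴ * krausAlpha K Kd h * C).trace).re +
              ((Ct * krausBeta K Kd h).trace).re} } := by
  obtain ⟨h₀, h₀h, h₀β⟩ := hfeas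
  obtain ⟨hst, hsth, hstβ, hmin, Ct, hCt, hineq⟩ := SDaux.exists_opt K Kd C hτ h₀ h₀h h₀β
  have hobj := SDaux.objective_eq K Kd C
  -- the primal value is `fval hst`
  have hPrimal : sInf {x : ℝ | ∃ h : Matrix (Fin r) (Fin r) ℂ, h.IsHermitian ∧
      krausBeta K Kd h = 0 ∧
      x = 4 * ((Cᴴ * krausAlpha K Kd h * C).trace).re} = SDaux.fval K Kd C hst := by
    apply IsLeast.csInf_eq
    constructor
    · exact ⟨hst, hsth, hstβ, (hobj hst).symm⟩
    · rintro x ⟨h, hh, hβ, rfl⟩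
      rw [hobj h]
      exact hmin h hh hβ
  rw [hPrimal]
  -- notation for the inner (Lagrangian) sets
  set S : Matrix (Fin d) (Fin d) ℂ → Set ℝ := fun Ct' =>
    {y : ℝ | ∃ h : Matrix (Fin r) (Fin r) ℂ, h.IsHermitian ∧
      y = 4 * ((Cᴴ * krausAlpha K Kd h * C).trace).re +
        ((Ct' * krausBeta K Kd h).trace).re} with hS
  have hmemS : ∀ Ct' : Matrix (Fin d) (Fin d) ℂ, SDaux.fval K Kd C hst ∈ S Ct' := by
    intro Ct'
    refine ⟨hst, hsth, ?_⟩
    rw [hobj hst, hstβ]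
    simp
  -- every dual value is at most `fval hst`
  have hub : ∀ x ∈ {x : ℝ | ∃ Ct' : Matrix (Fin d) (Fin d) ℂ, Ct'.IsHermitian ∧
      x = sInf (S Ct')}, x ≤ SDaux.fval K Kd C hst := by
    rintro x ⟨Ct', _, rfl⟩
    by_cases hb : BddBelow (S Ct')
    · exact csInf_le hb (hmemS Ct')
    · rw [Real.sInf_of_not_bddBelow hb]
      exact SDaux.fval_nonneg K Kd C hst
  -- the multiplier `Ct` attains the primal value
  have hmem : SDaux.fval K Kd C hst ∈ {x : ℝ | ∃ Ct' : Matrix (Fin d) (Fin d) ℂ, Ct'.IsHermitian ∧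
      x = sInf (S Ct')} := by
    refine ⟨Ct, hCt, ?_⟩
    refine (IsLeast.csInf_eq ?_).symm
    constructor
    · exact hmemS Ct
    · rintro y ⟨h, hh, rfl⟩
      rw [hobj h]
      exact hineq h hh
  exact (le_antisymm (csSup_le ⟨_, hmem⟩ hub) (le_csSup ⟨_, hub⟩ hmem)).symm
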